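/- If a domain D is single-peaked on a tree G, then every extreme rule on G is efficient on D: for every profile P, the selected alternative π(ℓ,τ(P)) belongs to the path hull H(τ(P)), and no alternative is strictly preferred to any element of H(τ(P)) by all agents. -/
import Mathlib


open SimpleGraph

/-- `z` lies on a path from `x` to `y` in `G` (in a tree, the unique path). -/
def pathSet {X : Type*} (G : SimpleGraph X) (x y z : X) : Prop :=
  ∃ p : G.Walk x y, p.IsPath ∧ z ∈ p.support

/-- The path hull `H(S)`: union of paths between pairs of nodes of `S`. -/
def hull {X : Type*} (G : SimpleGraph X) (S : Set X) (z : X) : Prop :=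
  ∃ x ∈ S, ∃ y ∈ S, pathSet G x y z

/-- `m` is a distance minimizer of `x` on the path hull of `S`. -/
def isMinimizer {X : Type*} (G : SimpleGraph X) (x : X) (S : Set X) (m : X) : Prop :=
  hull G S m ∧ ∀ y, hull G S y → G.dist x m ≤ G.dist x y

/-- `ℓ` is a leaf: it has exactly one neighbor. -/
def isLeaf {X : Type*} (G : SimpleGraph X) (ℓ : X) : Prop := ∃! x, G.Adj ℓ x

/-- `t` is the top-ranked alternative of the strict preference `P`. -/
def isTop {X : Type*} (P : X → X → Prop) (t : X) : Prop := ∀ y, y ≠ t → P t y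

/-- `P` with peak `t` is single-peaked on the tree `G`. -/
def singlePeakedAt {X : Type*} (G : SimpleGraph X) (P : X → X → Prop) (t : X) : Prop :=
  ∀ a b, a ≠ b → pathSet G t a b → P b a

lemma pathSet_split {X : Type*} (G : SimpleGraph X) (hG : G.IsAcyclic) (hcon : G.Connected)
    {x y z : X} (a : X) (h : pathSet G x y z) :
    pathSet G x a z ∨ pathSet G y a z := by
  classical
  obtain ⟨p, hp, hz⟩ := h
  obtain ⟨w1⟩ := hcon x a
  obtain ⟨w2⟩ := hcon a y
  have hw : ((w1.bypass.append w2.bypass).bypass : G.Walk x y) = p := by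
    have := hG.path_unique ⟨(w1.bypass.append w2.bypass).bypass, Walk.bypass_isPath _⟩ ⟨p, hp⟩
    exact congrArg Subtype.val this
  have hz' : z ∈ (w1.bypass.append w2.bypass).support := by
    rw [← hw] at hz; exact Walk.support_bypass_subset _ hz
  rw [Walk.mem_support_append_iff] at hz'
  rcases hz' with h | h
  · exact Or.inl ⟨w1.bypass, Walk.bypass_isPath _, h⟩
  · exact Or.inr ⟨w2.bypass.reverse, (Walk.bypass_isPath _).reverse, by simpa using h⟩

theorem extreme_rule_efficient_on_sp {X : Type*} [Fintype X]
    (G : SimpleGraph X) (hG : G.IsTree)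
    (ℓ : X) (hℓ : isLeaf G ℓ)
    (n : ℕ) (hn : 0 < n)
    (D : Set (X → X → Prop))
    (hD : ∀ P ∈ D, IsStrictTotalOrder X P)
    (hsp : ∀ P ∈ D, ∀ s : X, isTop P s → singlePeakedAt G P s)
    (P : Fin n → (X → X → Prop)) (hP : ∀ i, P i ∈ D)
    (t : Fin n → X) (ht : ∀ i, isTop (P i) (t i))
    (c : X) (hc : isMinimizer G ℓ (Set.range t) c) :
    hull G (Set.range t) c ∧
      ∀ a y : X, hull G (Set.range t) y → ¬ (∀ i, P i a y) := by
  refine ⟨hc.1, ?_⟩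
  intro a y hy hall
  obtain ⟨x1, ⟨i, rfl⟩, x2, ⟨j, rfl⟩, hpath⟩ := hy
  haveI := hD (P i) (hP i)
  haveI := hD (P j) (hP j)
  by_cases hay : y = a
  · subst hay; exact irrefl y (hall i)
  · rcases pathSet_split G hG.IsAcyclic hG.isConnected a hpath with h | h
    · exact asymm (hall i) (hsp (P i) (hP i) (t i) (ht i) a y (Ne.symm hay) h)
    · exact asymm (hall j) (hsp (P j) (hP j) (t j) (ht j) a y (Ne.symm hay) h)
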